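/- arXiv:0901.4312 — 4 statements merged into one kernel-verified Lean document; each statement's English description precedes it below -/
import Mathlib

section
/- Let V : ℝ → ℝ be differentiable with V' = ξ·V^{k1}·(1-V)^{k3}, 0 < V < 1, and let b1 : ℝ → ℝ satisfy b1' = (1-k1)·ξ^2·V^{2k1-3}·(1-V)^{2k3-1}·V' (equivalently db1 = (1-k1)·ξ·V^{k1-2}·(1-V)^{k3-1} dV composed with V). Set b2 = b1 + ξ·V^{k1-1}·(1-V)^{k3} and b3 = b1 + ξ·V^{k1-1}·(1-V)^{k3-1}, and assume k1 + k2 + k3 = 2. Then (b1, b2, b3) solves the system b_i' = (1-k_i)·∏_{j≠i}(b_i - b_j) for i = 1,2,3. -/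
theorem stmt2 (k1 k2 k3 ξ : ℝ) (hk : k1 + k2 + k3 = 2) (hξ : ξ ≠ 0)
    (V : ℝ → ℝ) (hV : Differentiable ℝ V)
    (hV01 : ∀ v, 0 < V v ∧ V v < 1)
    (hode : ∀ v, deriv V v = ξ * V v ^ k1 * (1 - V v) ^ k3)
    (b1 : ℝ → ℝ) (hb1 : Differentiable ℝ b1)
    (hb1' : ∀ v, deriv b1 v = (1 - k1) * ξ * V v ^ (k1 - 2) * (1 - V v) ^ (k3 - 1) * deriv V v)
    (b2 b3 : ℝ → ℝ)
    (hb2 : ∀ v, b2 v = b1 v + ξ * V v ^ (k1 - 1) * (1 - V v) ^ k3)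
    (hb3 : ∀ v, b3 v = b1 v + ξ * V v ^ (k1 - 1) * (1 - V v) ^ (k3 - 1)) :
    (∀ v, deriv b1 v = (1 - k1) * (b1 v - b2 v) * (b1 v - b3 v)) ∧
    (∀ v, deriv b2 v = (1 - k2) * (b2 v - b1 v) * (b2 v - b3 v)) ∧
    (∀ v, deriv b3 v = (1 - k3) * (b3 v - b1 v) * (b3 v - b2 v)) := by
  have hV' : ∀ v, HasDerivAt V (deriv V v) v := fun v => (hV v).hasDerivAt
  have hp : ∀ v, (0:ℝ) < V v := fun v => (hV01 v).1
  have hq : ∀ v, (0:ℝ) < 1 - V v := fun v => by linarith [(hV01 v).2]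
  have key : ∀ (a b : ℝ) (v : ℝ), HasDerivAt (fun x => ξ * V x ^ a * (1 - V x) ^ b)
      ((ξ * (a * V v ^ (a-1) * deriv V v)) * (1 - V v) ^ b
        + ξ * V v ^ a * (b * (1 - V v) ^ (b-1) * (-deriv V v))) v := by
    intro a b v
    have h1 : HasDerivAt (fun x => V x ^ a) (a * V v ^ (a-1) * deriv V v) v := by
      have := (hV' v).rpow_const (p := a) (Or.inl (hp v).ne')
      convert this using 1 <;> ring
    have h2 : HasDerivAt (fun x => (1 - V x) ^ b) (b * (1 - V v) ^ (b-1) * (-deriv V v)) v := by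
      have := ((hasDerivAt_const v (1:ℝ)).sub (hV' v)).rpow_const (p := b) (Or.inl (hq v).ne')
      convert this using 1 <;> first | rfl | (simp only [Pi.sub_apply]; ring)
    have := (h1.const_mul ξ).mul h2
    convert this using 1 <;> first | rfl | ring
  have hb2f : b2 = fun x => b1 x + ξ * V x ^ (k1-1) * (1 - V x) ^ k3 := funext hb2
  have hb3f : b3 = fun x => b1 x + ξ * V x ^ (k1-1) * (1 - V x) ^ (k3-1) := funext hb3
  have hd2 : ∀ v, deriv b2 v = deriv b1 v +
      ((ξ * ((k1-1) * V v ^ (k1-1-1) * deriv V v)) * (1 - V v) ^ k3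
        + ξ * V v ^ (k1-1) * (k3 * (1 - V v) ^ (k3-1) * (-deriv V v))) := by
    intro v
    rw [hb2f]
    exact (((hb1 v).hasDerivAt).add (key (k1-1) k3 v)).deriv
  have hd3 : ∀ v, deriv b3 v = deriv b1 v +
      ((ξ * ((k1-1) * V v ^ (k1-1-1) * deriv V v)) * (1 - V v) ^ (k3-1)
        + ξ * V v ^ (k1-1) * ((k3-1) * (1 - V v) ^ (k3-1-1) * (-deriv V v))) := by
    intro v
    rw [hb3f]
    exact (((hb1 v).hasDerivAt).add (key (k1-1) (k3-1) v)).deriv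
  have hk2 : k2 = 2 - k1 - k3 := by linarith
  have e12 : (k1:ℝ) - 2 = k1 - 1 - 1 := by ring
  refine ⟨?_, ?_, ?_⟩
  · intro v
    rw [hb1' v, hode v, hb2 v, hb3 v, e12]
    have hpne := (hp v).ne'
    have hqne := (hq v).ne'
    simp only [Real.rpow_sub (hp v), Real.rpow_sub (hq v), Real.rpow_one]
    field_simp
    ring
  · intro v
    rw [hd2 v, hb1' v, hode v, hb2 v, hb3 v, e12, hk2]
    have hpne := (hp v).ne'
    have hqne := (hq v).ne'
    simp only [Real.rpow_sub (hp v), Real.rpow_sub (hq v), Real.rpow_one]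
    field_simp
    ring
  · intro v
    rw [hd3 v, hb1' v, hode v, hb2 v, hb3 v, e12]
    have hpne := (hp v).ne'
    have hqne := (hq v).ne'
    simp only [Real.rpow_sub (hp v), Real.rpow_sub (hq v), Real.rpow_one]
    field_simp
    ring
end

section
/- Let s : ℝ → ℝ satisfy the Riccati equation s' = s² + B2·s + B3 where B2 = -(k1·b1 + k2·b2 + k3·b3) and B3 = (1-k1)·b2·b3 + (1-k2)·b1·b3 + (1-k3)·b1·b2 for constants b1, b2, b3, k1, k2, k3 with k1 + k2 + k3 = 2. If s(v) ≠ b1(v) for all v, then f = 1/(s - b1) satisfies the linear ODE f' = (k3·(b3 - b1) + k2·(b2 - b1))·f - 1, provided b1' = (1-k1)·(b1-b2)·(b1-b3). -/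
theorem stmt3 (k1 k2 k3 : ℝ) (hk : k1 + k2 + k3 = 2)
    (b1 b2 b3 : ℝ → ℝ)
    (hb1 : Differentiable ℝ b1) (hb2 : Differentiable ℝ b2) (hb3 : Differentiable ℝ b3)
    (hb1' : ∀ v, deriv b1 v = (1 - k1) * (b1 v - b2 v) * (b1 v - b3 v))
    (s : ℝ → ℝ) (hs : Differentiable ℝ s)
    (hric : ∀ v, deriv s v = s v ^ 2
      + (-(k1 * b1 v + k2 * b2 v + k3 * b3 v)) * s v
      + ((1 - k1) * b2 v * b3 v + (1 - k2) * b1 v * b3 v + (1 - k3) * b1 v * b2 v))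
    (hne : ∀ v, s v ≠ b1 v) :
    ∀ v, deriv (fun v => 1 / (s v - b1 v)) v =
      (k3 * (b3 v - b1 v) + k2 * (b2 v - b1 v)) * (1 / (s v - b1 v)) - 1 := by
  intro v
  have hsub : s v - b1 v ≠ 0 := sub_ne_zero.mpr (hne v)
  have hg : HasDerivAt (fun v => s v - b1 v) (deriv s v - deriv b1 v) v :=
    (hs v).hasDerivAt.sub (hb1 v).hasDerivAt
  have hinv : HasDerivAt (fun v => 1 / (s v - b1 v))
      (-(deriv s v - deriv b1 v) / (s v - b1 v) ^ 2) v := by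
    simpa [one_div, Pi.inv_def] using hg.inv hsub
  rw [hinv.deriv, hric v, hb1' v]
  have hk1 : k1 = 2 - k2 - k3 := by linarith
  field_simp
  ring_nf
  rw [hk1]
  ring
end

section
/- Let g : ℝ → ℝ be twice differentiable with g' never zero, and suppose g''/(g')² = k1/(g - b1) + k2/(g - b2) + k3/(g - b3) pointwise, with g(v) never equal to b1, b2, or b3 (b1, b2, b3, k1, k2, k3 constants). Then there exists a constant b such that g' = b·(g - b1)^{k1}·(g - b2)^{k2}·(g - b3)^{k3}, provided g - b1, g - b2, g - b3 are everywhere positive. -/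
theorem stmt6 (g : ℝ → ℝ) (b1 b2 b3 k1 k2 k3 : ℝ)
    (hg : ContDiff ℝ 2 g)
    (hpos1 : ∀ v, 0 < g v - b1) (hpos2 : ∀ v, 0 < g v - b2) (hpos3 : ∀ v, 0 < g v - b3)
    (hg' : ∀ v, deriv g v ≠ 0)
    (h : ∀ v, deriv (deriv g) v / (deriv g v) ^ 2 =
      k1 / (g v - b1) + k2 / (g v - b2) + k3 / (g v - b3)) :
    ∃ b : ℝ, ∀ v, deriv g v =
      b * (g v - b1) ^ k1 * (g v - b2) ^ k2 * (g v - b3) ^ k3 := by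
  have hgd : Differentiable ℝ g := hg.differentiable (by norm_num)
  have h2 : ContDiff ℝ ((1 : ℕ) + 1) g := by exact_mod_cast hg
  have hg'd : Differentiable ℝ (deriv g) :=
    ((contDiff_succ_iff_deriv.mp h2).2.2).differentiable (by norm_num)
  set F : ℝ → ℝ := fun v => deriv g v * (g v - b1) ^ (-k1) * (g v - b2) ^ (-k2)
      * (g v - b3) ^ (-k3) with hF
  have key : ∀ v, HasDerivAt F 0 v := by
    intro v
    have hG : HasDerivAt g (deriv g v) v := (hgd v).hasDerivAt
    have hG' : HasDerivAt (deriv g) (deriv (deriv g) v) v := (hg'd v).hasDerivAt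
    have hA : HasDerivAt (fun v => (g v - b1) ^ (-k1))
        (deriv g v * (-k1) * (g v - b1) ^ (-k1 - 1)) v :=
      (hG.sub_const b1).rpow_const (Or.inl (ne_of_gt (hpos1 v)))
    have hB : HasDerivAt (fun v => (g v - b2) ^ (-k2))
        (deriv g v * (-k2) * (g v - b2) ^ (-k2 - 1)) v :=
      (hG.sub_const b2).rpow_const (Or.inl (ne_of_gt (hpos2 v)))
    have hC : HasDerivAt (fun v => (g v - b3) ^ (-k3))
        (deriv g v * (-k3) * (g v - b3) ^ (-k3 - 1)) v :=
      (hG.sub_const b3).rpow_const (Or.inl (ne_of_gt (hpos3 v)))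
    have hFd := ((hG'.mul hA).mul hB).mul hC
    convert hFd using 1
    all_goals try rfl
    simp only [Pi.mul_apply]
    have e1 : (g v - b1) ^ (-k1 - 1) = (g v - b1) ^ (-k1) / (g v - b1) :=
      Real.rpow_sub_one (ne_of_gt (hpos1 v)) _
    have e2 : (g v - b2) ^ (-k2 - 1) = (g v - b2) ^ (-k2) / (g v - b2) :=
      Real.rpow_sub_one (ne_of_gt (hpos2 v)) _
    have e3 : (g v - b3) ^ (-k3 - 1) = (g v - b3) ^ (-k3) / (g v - b3) :=
      Real.rpow_sub_one (ne_of_gt (hpos3 v)) _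
    have hdd : deriv (deriv g) v = (k1 / (g v - b1) + k2 / (g v - b2) + k3 / (g v - b3))
        * (deriv g v) ^ 2 := by
      have := h v
      rw [div_eq_iff (pow_ne_zero 2 (hg' v))] at this
      exact this
    rw [e1, e2, e3, hdd]
    have n1 := (hpos1 v).ne'
    have n2 := (hpos2 v).ne'
    have n3 := (hpos3 v).ne'
    field_simp
    ring
  have hFdiff : Differentiable ℝ F := fun v => (key v).differentiableAt
  have hFderiv : ∀ v, deriv F v = 0 := fun v => (key v).deriv
  refine ⟨F 0, fun v => ?_⟩
  have hc : F v = F 0 := is_const_of_deriv_eq_zero hFdiff hFderiv v 0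
  have p1 := hpos1 v; have p2 := hpos2 v; have p3 := hpos3 v
  have r1 : (g v - b1) ^ (-k1) * (g v - b1) ^ k1 = 1 := by
    rw [← Real.rpow_add p1]; simp
  have r2 : (g v - b2) ^ (-k2) * (g v - b2) ^ k2 = 1 := by
    rw [← Real.rpow_add p2]; simp
  have r3 : (g v - b3) ^ (-k3) * (g v - b3) ^ k3 = 1 := by
    rw [← Real.rpow_add p3]; simp
  have key2 : F v * (g v - b1) ^ k1 * (g v - b2) ^ k2 * (g v - b3) ^ k3 = deriv g v := by
    have expand : F v * (g v - b1) ^ k1 * (g v - b2) ^ k2 * (g v - b3) ^ k3 =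
        deriv g v * (((g v - b1) ^ (-k1) * (g v - b1) ^ k1) *
          ((g v - b2) ^ (-k2) * (g v - b2) ^ k2) *
          ((g v - b3) ^ (-k3) * (g v - b3) ^ k3)) := by
      simp only [hF]; ring
    rw [expand, r1, r2, r3]; ring
  rw [← hc]
  exact key2.symm
end

section
/- Let s(v,w) = ξ·V(v)^{k1-1}(1-V(v))^{k3}/(1-V(v)·W(w)) + b1(v) where V' = ξ·V^{k1}(1-V)^{k3}, b1' = (1-k1)·ξ·V^{k1-2}(1-V)^{k3-1}·V', W depends only on w, 0 < V < 1, 0 < W < 1, V·W < 1, and k1 + k2 + k3 = 2. Then s satisfies the Riccati equation ∂s/∂v = s² + B2·s + B3, where B2 = -(k1·b1 + k2·b2 + k3·b3), B3 = (1-k1)·b2·b3 + (1-k2)·b1·b3 + (1-k3)·b1·b2, with b2 = b1 + ξ·V^{k1-1}(1-V)^{k3} and b3 = b1 + ξ·V^{k1-1}(1-V)^{k3-1}. -/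
theorem stmt8 (ξ k1 k2 k3 : ℝ) (hξ : ξ ≠ 0) (hk : k1 + k2 + k3 = 2)
    (V : ℝ → ℝ) (hV : Differentiable ℝ V)
    (hV01 : ∀ v, 0 < V v ∧ V v < 1)
    (hode : ∀ v, deriv V v = ξ * V v ^ k1 * (1 - V v) ^ k3)
    (b1 : ℝ → ℝ) (hb1 : Differentiable ℝ b1)
    (hb1' : ∀ v, deriv b1 v = (1 - k1) * ξ * V v ^ (k1 - 2) * (1 - V v) ^ (k3 - 1) * deriv V v)
    (W : ℝ → ℝ) (hW01 : ∀ w, 0 < W w ∧ W w < 1)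
    (hVW : ∀ v w, V v * W w < 1) :
    ∀ w v,
      deriv (fun v => ξ * V v ^ (k1 - 1) * (1 - V v) ^ k3 / (1 - V v * W w) + b1 v) v =
        (ξ * V v ^ (k1 - 1) * (1 - V v) ^ k3 / (1 - V v * W w) + b1 v) ^ 2
        + (-(k1 * b1 v
              + k2 * (b1 v + ξ * V v ^ (k1 - 1) * (1 - V v) ^ k3)
              + k3 * (b1 v + ξ * V v ^ (k1 - 1) * (1 - V v) ^ (k3 - 1)))) *
            (ξ * V v ^ (k1 - 1) * (1 - V v) ^ k3 / (1 - V v * W w) + b1 v)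
        + ((1 - k1) * (b1 v + ξ * V v ^ (k1 - 1) * (1 - V v) ^ k3) *
              (b1 v + ξ * V v ^ (k1 - 1) * (1 - V v) ^ (k3 - 1))
            + (1 - k2) * b1 v * (b1 v + ξ * V v ^ (k1 - 1) * (1 - V v) ^ (k3 - 1))
            + (1 - k3) * b1 v * (b1 v + ξ * V v ^ (k1 - 1) * (1 - V v) ^ k3)) := by
  intro w v
  obtain ⟨hx0, hx1⟩ := hV01 v
  have h1x : (0:ℝ) < 1 - V v := by linarith
  have hden : 1 - V v * W w ≠ 0 := by
    exact (sub_pos.mpr (hVW v w)).ne'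
  have hV' : HasDerivAt V (deriv V v) v := (hV v).hasDerivAt
  have hA : HasDerivAt (fun v => V v ^ (k1 - 1)) (deriv V v * (k1 - 1) * V v ^ (k1 - 1 - 1)) v :=
    hV'.rpow_const (Or.inl hx0.ne')
  have hC : HasDerivAt (fun v => (1 - V v) ^ k3)
      ((0 - deriv V v) * k3 * (1 - V v) ^ (k3 - 1)) v :=
    ((hasDerivAt_const v (1:ℝ)).sub hV').rpow_const (Or.inl h1x.ne')
  have hN : HasDerivAt (fun v => ξ * V v ^ (k1 - 1) * (1 - V v) ^ k3)
      ((ξ * (deriv V v * (k1 - 1) * V v ^ (k1 - 1 - 1))) * (1 - V v) ^ k3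
        + (ξ * V v ^ (k1 - 1)) * ((0 - deriv V v) * k3 * (1 - V v) ^ (k3 - 1))) v :=
    (hA.const_mul ξ).mul hC
  have hD : HasDerivAt (fun v => 1 - V v * W w) (0 - deriv V v * W w) v :=
    (hasDerivAt_const v (1:ℝ)).sub (hV'.mul_const (W w))
  have hB1 : HasDerivAt b1 (deriv b1 v) v := (hb1 v).hasDerivAt
  have hsum : HasDerivAt (fun v => ξ * V v ^ (k1 - 1) * (1 - V v) ^ k3 / (1 - V v * W w) + b1 v) _ v :=
    (hN.div hD hden).add hB1
  have htot := hsum.deriv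
  rw [htot, hb1' v, hode v]
  have e1 : V v ^ k1 = V v ^ (k1 - 1) * V v := by
    rw [show k1 = (k1 - 1) + 1 by ring]
    rw [Real.rpow_add_one hx0.ne']
    ring_nf
  have e2 : V v ^ (k1 - 1 - 1) = V v ^ (k1 - 1) / V v := by
    rw [Real.rpow_sub hx0, Real.rpow_one]
  have e2' : V v ^ (k1 - 2) = V v ^ (k1 - 1) / V v := by
    rw [show k1 - 2 = k1 - 1 - 1 by ring, Real.rpow_sub hx0, Real.rpow_one]
  have e3 : (1 - V v) ^ k3 = (1 - V v) ^ (k3 - 1) * (1 - V v) := by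
    rw [← Real.rpow_add_one h1x.ne']
    ring_nf
  have hk2 : k2 = 2 - k1 - k3 := by linarith
  rw [e1, e2, e2', e3, hk2]
  field_simp
  ring
end
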